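/- If a graph G contains an independent set X with vol(X)/vol(V∖X) > 1/2, then the spectral gap λ of the normalized Laplacian of G satisfies λ > 1/2. More generally, for any independent set X, λ ≥ vol(X)/vol(V∖X). -/

import Mathlib

open SimpleGraph Finset

universe u
variable {V : Type u}

/-- One step of the Iterated Local Transitivity model: every vertex `x` gets a
clone `Sum.inr x` joined to `x` and all of its neighbours; old vertices are `Sum.inl`. -/
def ILTstep (G : SimpleGraph V) : SimpleGraph (V ⊕ V) where
  Adj a b := match a, b with
    | Sum.inl x, Sum.inl y => G.Adj x y
    | Sum.inl x, Sum.inr y => x = y ∨ G.Adj x y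
    | Sum.inr x, Sum.inl y => x = y ∨ G.Adj x y
    | Sum.inr _, Sum.inr _ => False
  symm := by
    constructor
    rintro (x | x) (y | y) h
    · exact G.adj_symm h
    · exact h.imp Eq.symm (fun hh => G.adj_symm hh)
    · exact h.imp Eq.symm (fun hh => G.adj_symm hh)
    · exact h.elim
  loopless := by
    constructor
    rintro (x | x) h
    · exact G.irrefl h
    · exact h

instance ILTstepDecAdj (G : SimpleGraph V) [DecidableEq V] [DecidableRel G.Adj] :
    DecidableRel (ILTstep G).Adj := fun a b =>
  match a, b with
  | Sum.inl x, Sum.inl y => inferInstanceAs (Decidable (G.Adj x y))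
  | Sum.inl x, Sum.inr y => inferInstanceAs (Decidable (x = y ∨ G.Adj x y))
  | Sum.inr x, Sum.inl y => inferInstanceAs (Decidable (x = y ∨ G.Adj x y))
  | Sum.inr _, Sum.inr _ => inferInstanceAs (Decidable False)

/-- The vertex set of the ILT model at time `t`. -/
def ILTV (V : Type u) : ℕ → Type u
  | 0 => V
  | t + 1 => ILTV V t ⊕ ILTV V t

/-- The graph of the ILT model at time `t`, starting from `G`. -/
def ILTG (G : SimpleGraph V) : (t : ℕ) → SimpleGraph (ILTV V t)
  | 0 => G
  | t + 1 => ILTstep (ILTG G t)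

instance ILTVFintype [Fintype V] : ∀ t, Fintype (ILTV V t)
  | 0 => inferInstanceAs (Fintype V)
  | t + 1 => letI := ILTVFintype t
             inferInstanceAs (Fintype (ILTV V t ⊕ ILTV V t))

instance ILTVDecEq [DecidableEq V] : ∀ t, DecidableEq (ILTV V t)
  | 0 => inferInstanceAs (DecidableEq V)
  | t + 1 => letI := ILTVDecEq t
             inferInstanceAs (DecidableEq (ILTV V t ⊕ ILTV V t))

instance ILTGDecAdj (G : SimpleGraph V) [DecidableEq V] [DecidableRel G.Adj] :
    ∀ t, DecidableRel (ILTG G t).Adj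
  | 0 => inferInstanceAs (DecidableRel G.Adj)
  | t + 1 => letI : DecidableEq (ILTV V t) := ILTVDecEq t
             letI : DecidableRel (ILTG G t).Adj := ILTGDecAdj G t
             ILTstepDecAdj (ILTG G t)

/-- The volume of a graph: the sum of the degrees of its vertices. -/
def graphVol [Fintype V] (G : SimpleGraph V) [DecidableRel G.Adj] : ℕ :=
  ∑ v, G.degree v

/-- The Wiener index: the sum of distances over unordered pairs of vertices. -/
noncomputable def wienerIndex [Fintype V] (G : SimpleGraph V) : ℕ :=
  (∑ x : V, ∑ y : V, G.dist x y) / 2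

/-- The normalized Laplacian `I - D^{-1/2} A D^{-1/2}` of a graph. -/
noncomputable def normalizedLaplacian [Fintype V] [DecidableEq V]
    (G : SimpleGraph V) [DecidableRel G.Adj] : Matrix V V ℝ :=
  1 - Matrix.diagonal (fun v => (Real.sqrt (G.degree v))⁻¹) * G.adjMatrix ℝ *
      Matrix.diagonal (fun v => (Real.sqrt (G.degree v))⁻¹)

/-- The eigenvalues of a Hermitian matrix, listed in nondecreasing order. -/
noncomputable def sortedEigs {n : Type*} [Fintype n] [DecidableEq n]
    (M : Matrix n n ℝ) (hM : M.IsHermitian) : Fin (Fintype.card n) → ℝ :=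
  (hM.eigenvalues ∘ (Fintype.equivFin n).symm) ∘
    Tuple.sort (hM.eigenvalues ∘ (Fintype.equivFin n).symm)

/-- The spectral gap `max {|λ₁ - 1|, |λ_{n-1} - 1|}` of a Hermitian matrix
(with eigenvalues `λ₀ ≤ λ₁ ≤ ⋯ ≤ λ_{n-1}`). -/
noncomputable def spectralGap {n : Type*} [Fintype n] [DecidableEq n]
    (M : Matrix n n ℝ) (hM : M.IsHermitian) (hn : 1 < Fintype.card n) : ℝ :=
  max |sortedEigs M hM ⟨1, hn⟩ - 1|
      |sortedEigs M hM ⟨Fintype.card n - 1, by omega⟩ - 1|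


open Matrix

/-- Rayleigh-type upper bound: the quadratic form of a real symmetric matrix is bounded
by any upper bound on its eigenvalues. -/
theorem rayleigh_upper_aux {n : Type*} [Fintype n] [DecidableEq n]
    (M : Matrix n n ℝ) (hM : M.IsHermitian) (f : n → ℝ) (lam : ℝ)
    (hlam : ∀ i, hM.eigenvalues i ≤ lam) :
    f ⬝ᵥ (M *ᵥ f) ≤ lam * (f ⬝ᵥ f) := by
  set U : Matrix n n ℝ := (hM.eigenvectorUnitary : Matrix n n ℝ) with hU
  set g : n → ℝ := star U *ᵥ f with hg
  have hUU : U * star U = 1 := (Matrix.mem_unitaryGroup_iff).mp hM.eigenvectorUnitary.2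
  have hfg : ∀ x : n → ℝ, f ⬝ᵥ (U *ᵥ x) = g ⬝ᵥ x := by
    intro x
    rw [Matrix.dotProduct_mulVec, hg]
    congr 1
    rw [Matrix.star_eq_conjTranspose, Matrix.conjTranspose_eq_transpose_of_trivial,
      Matrix.mulVec_transpose]
  have h1 : f ⬝ᵥ (M *ᵥ f) = ∑ i, hM.eigenvalues i * (g i)^2 := by
    conv_lhs => rw [hM.spectral_theorem, Unitary.conjStarAlgAut_apply]
    rw [← Matrix.mulVec_mulVec, ← Matrix.mulVec_mulVec, hfg]
    simp only [dotProduct, Matrix.mulVec_diagonal, Function.comp_apply,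
      RCLike.ofReal_real_eq_id, id_eq]
    exact Finset.sum_congr rfl fun i _ => by ring
  have h2 : f ⬝ᵥ f = ∑ i, (g i)^2 := by
    have h3 : f ⬝ᵥ f = f ⬝ᵥ ((U * star U) *ᵥ f) := by rw [hUU, Matrix.one_mulVec]
    rw [h3, ← Matrix.mulVec_mulVec, hfg]
    simp [dotProduct, sq, ← hg]
  rw [h1, h2, Finset.mul_sum]
  exact Finset.sum_le_sum fun i _ => by nlinarith [sq_nonneg (g i), hlam i]

theorem eig_le_sorted_max_aux {n : Type*} [Fintype n] [DecidableEq n]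
    (M : Matrix n n ℝ) (hM : M.IsHermitian) (hn : 1 < Fintype.card n) (i : n) :
    hM.eigenvalues i ≤ sortedEigs M hM ⟨Fintype.card n - 1, by omega⟩ := by
  have mono : Monotone (sortedEigs M hM) :=
    Tuple.monotone_sort (hM.eigenvalues ∘ (Fintype.equivFin n).symm)
  set e := Fintype.equivFin n with he
  set sig := Tuple.sort (hM.eigenvalues ∘ e.symm) with hsig
  have h1 : sortedEigs M hM (sig.symm (e i)) = hM.eigenvalues i := by
    show ((hM.eigenvalues ∘ e.symm) ∘ sig) (sig.symm (e i)) = _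
    simp
  rw [← h1]
  refine mono ?_
  rw [Fin.le_def]
  have := (sig.symm (e i)).isLt
  simp only []
  omega

theorem independent_set_spectral_gap [Fintype V] [DecidableEq V]
    (G : SimpleGraph V) [DecidableRel G.Adj]
    (hd : ∀ v, 0 < G.degree v) (hn : 1 < Fintype.card V)
    (hH : (normalizedLaplacian G).IsHermitian)
    (X : Finset V) (hX : ∀ x ∈ X, ∀ y ∈ X, ¬ G.Adj x y) :
    ((∑ v ∈ X, G.degree v : ℝ) / (∑ v ∈ Xᶜ, G.degree v : ℝ)
        ≤ spectralGap (normalizedLaplacian G) hH hn) ∧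
    (1 / 2 < (∑ v ∈ X, G.degree v : ℝ) / (∑ v ∈ Xᶜ, G.degree v : ℝ) →
        1 / 2 < spectralGap (normalizedLaplacian G) hH hn) := by
  classical
  have hNV : Nonempty V := Fintype.card_pos_iff.mp (by omega)
  set d : V → ℝ := fun v => (G.degree v : ℝ) with hd_def
  have hdpos : ∀ v, (0:ℝ) < d v := fun v => by simp only [hd_def]; exact_mod_cast hd v
  set phi : V → ℝ := fun v => Real.sqrt (d v) with hphi_def
  have hphipos : ∀ v, 0 < phi v := fun v => Real.sqrt_pos.mpr (hdpos v)
  set s : V → ℝ := fun v => (phi v)⁻¹ with hs_def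
  have hsphi : ∀ v, s v * phi v = 1 := fun v => inv_mul_cancel₀ (hphipos v).ne'
  have hphiphi : ∀ v, phi v * phi v = d v := fun v => Real.mul_self_sqrt (hdpos v).le
  have hsd : ∀ v, s v * d v = phi v := fun v => by
    rw [← hphiphi v, ← mul_assoc, hsphi v, one_mul]
  set M : Matrix V V ℝ := Matrix.diagonal s * G.adjMatrix ℝ * Matrix.diagonal s with hM_def
  have hL : normalizedLaplacian G = 1 - M := rfl
  have hMapp : ∀ (x : V → ℝ) (u : V),
      (M *ᵥ x) u = s u * ∑ v ∈ G.neighborFinset u, s v * x v := by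
    intro x u
    rw [hM_def, ← Matrix.mulVec_mulVec, ← Matrix.mulVec_mulVec, Matrix.mulVec_diagonal]
    congr 1
    rw [SimpleGraph.adjMatrix_mulVec_apply]
    exact Finset.sum_congr rfl fun v _ => Matrix.mulVec_diagonal s x v
  have hMphi : M *ᵥ phi = phi := by
    funext u
    rw [hMapp]
    rw [Finset.sum_congr rfl (fun v _ => hsphi v), Finset.sum_const,
      SimpleGraph.card_neighborFinset_eq_degree]
    simp only [nsmul_eq_mul, mul_one]
    exact hsd u
  set volX : ℝ := ∑ v ∈ X, d v with hvolX_def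
  set volC : ℝ := ∑ v ∈ Xᶜ, d v with hvolC_def
  set volG : ℝ := volX + volC with hvolG_def
  have hvolG_sum : volG = ∑ v, d v := Finset.sum_add_sum_compl X d
  have hvolX0 : 0 ≤ volX := Finset.sum_nonneg fun v _ => (hdpos v).le
  have hvolG0 : 0 < volG := by
    rw [hvolG_sum]
    exact Finset.sum_pos (fun v _ => hdpos v) Finset.univ_nonempty
  set g : V → ℝ := fun v => if v ∈ X then phi v else 0 with hg_def
  set al : ℝ := volX / volG with hal_def
  set f : V → ℝ := g - al • phi with hf_def
  have hphiphid : phi ⬝ᵥ phi = volG := by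
    rw [hvolG_sum]
    exact Finset.sum_congr rfl fun v _ => hphiphi v
  have hgphi : g ⬝ᵥ phi = volX := by
    rw [hvolX_def]
    have hp : ∀ v, g v * phi v = if v ∈ X then d v else 0 := by
      intro v; rw [hg_def]; by_cases h : v ∈ X <;> simp [h, hphiphi v]
    simp only [dotProduct, hp]
    rw [Finset.sum_ite_mem, Finset.univ_inter]
  have hphig : phi ⬝ᵥ g = volX := by rw [dotProduct_comm]; exact hgphi
  have hgg : g ⬝ᵥ g = volX := by
    rw [hvolX_def]
    have hp : ∀ v, g v * g v = if v ∈ X then d v else 0 := by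
      intro v; rw [hg_def]; by_cases h : v ∈ X <;> simp [h, hphiphi v]
    simp only [dotProduct, hp]
    rw [Finset.sum_ite_mem, Finset.univ_inter]
  have hMgg : g ⬝ᵥ (M *ᵥ g) = 0 := by
    apply Finset.sum_eq_zero
    intro u _
    by_cases hu : u ∈ X
    · have hz : ∑ v ∈ G.neighborFinset u, s v * g v = 0 := by
        refine Finset.sum_eq_zero fun v hv => ?_
        rw [SimpleGraph.mem_neighborFinset] at hv
        have hvX : v ∉ X := fun hvX => hX u hu v hvX hv
        simp [hg_def, hvX]
      rw [hMapp, hz, mul_zero, mul_zero]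
    · simp [hg_def, hu]
  have hMsymm : Mᵀ = M := by
    rw [hM_def]
    simp [Matrix.transpose_mul, Matrix.mul_assoc]
  have hphiMg : phi ⬝ᵥ (M *ᵥ g) = volX := by
    rw [Matrix.dotProduct_mulVec]
    have h1 : phi ᵥ* M = M *ᵥ phi := by
      conv_lhs => rw [← hMsymm]
      exact Matrix.vecMul_transpose M phi
    rw [h1, hMphi]
    exact hphig
  have hgMphi : g ⬝ᵥ (M *ᵥ phi) = volX := by rw [hMphi]; exact hgphi
  have hfMf : f ⬝ᵥ (M *ᵥ f) = -(volX^2 / volG) := by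
    rw [hf_def, Matrix.mulVec_sub, Matrix.mulVec_smul, hMphi]
    rw [sub_dotProduct, dotProduct_sub, dotProduct_sub,
      smul_dotProduct, smul_dotProduct, dotProduct_smul,
      dotProduct_smul, hMgg, hgphi, hphiMg, hphiphid]
    simp only [smul_eq_mul, hal_def]
    field_simp [hvolG0.ne']
    ring
  have hff : f ⬝ᵥ f = volX * volC / volG := by
    rw [hf_def]
    rw [sub_dotProduct, dotProduct_sub, dotProduct_sub,
      smul_dotProduct, smul_dotProduct, dotProduct_smul,
      dotProduct_smul, hgg, hgphi, hphig, hphiphid]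
    simp only [smul_eq_mul, hal_def]
    field_simp [hvolG0.ne']
    rw [hvolG_def]
    ring
  set lam : ℝ := sortedEigs (normalizedLaplacian G) hH ⟨Fintype.card V - 1, by omega⟩ with hlam_def
  have hray : f ⬝ᵥ ((normalizedLaplacian G) *ᵥ f) ≤ lam * (f ⬝ᵥ f) :=
    rayleigh_upper_aux _ hH f lam (fun i => eig_le_sorted_max_aux _ hH hn i)
  have hLf : f ⬝ᵥ ((normalizedLaplacian G) *ᵥ f) = f ⬝ᵥ f + volX^2 / volG := by
    rw [hL, Matrix.sub_mulVec, dotProduct_sub, Matrix.one_mulVec, hfMf]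
    ring
  have hkey : volX^2 ≤ (lam - 1) * (volX * volC) := by
    rw [hLf, hff] at hray
    have h2 : volX^2/volG ≤ (lam - 1) * (volX * volC / volG) := by linarith
    have h3 := mul_le_mul_of_nonneg_right h2 hvolG0.le
    rw [div_mul_cancel₀ _ hvolG0.ne', mul_assoc, div_mul_cancel₀ _ hvolG0.ne'] at h3
    exact h3
  have hgap_le : |lam - 1| ≤ spectralGap (normalizedLaplacian G) hH hn :=
    le_max_right _ _
  have part1 : volX / volC ≤ spectralGap (normalizedLaplacian G) hH hn := by
    rcases eq_or_lt_of_le hvolX0 with h0 | hXpos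
    · rw [← h0, zero_div]
      exact le_trans (abs_nonneg _) hgap_le
    · have hXne : X.Nonempty := by
        by_contra hc
        rw [Finset.not_nonempty_iff_eq_empty] at hc
        rw [hvolX_def, hc, Finset.sum_empty] at hXpos
        exact lt_irrefl 0 hXpos
      obtain ⟨x, hx⟩ := hXne
      obtain ⟨y, hy⟩ : (G.neighborFinset x).Nonempty := by
        rw [← Finset.card_pos, SimpleGraph.card_neighborFinset_eq_degree]
        exact hd x
      rw [SimpleGraph.mem_neighborFinset] at hy
      have hyC : y ∈ Xᶜ := Finset.mem_compl.mpr fun hyX => hX x hx y hyX hy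
      have hvolC : 0 < volC :=
        Finset.sum_pos' (fun v _ => (hdpos v).le) ⟨y, hyC, hdpos y⟩
      have hkey2 : volX ≤ (lam - 1) * volC := by
        nlinarith [hkey, hXpos]
      calc volX / volC ≤ lam - 1 := by
            rw [div_le_iff₀ hvolC]; linarith [hkey2]
        _ ≤ |lam - 1| := le_abs_self _
        _ ≤ _ := hgap_le
  exact ⟨part1, fun h => lt_of_lt_of_le h part1⟩
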